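/- arXiv:1811.08710 — 9 statements merged into one kernel-verified Lean document; each statement's English description precedes it below -/
import Mathlib

section
/- Let A be a symmetric matrix on ℝ^d whose positive eigenspace has dimension at most one. Then for all vectors x, y with ⟨y, Ay⟩ ≥ 0, we have ⟨x, Ay⟩² ≥ ⟨x, Ax⟩⟨y, Ay⟩. -/
open Matrix

/-- The positive eigenspace of a matrix: the span of all eigenspaces with
strictly positive eigenvalue. -/
noncomputable def posEigenspace {d : ℕ} (A : Matrix (Fin d) (Fin d) ℝ) :
    Submodule ℝ (Fin d → ℝ) :=
  ⨆ μ : ℝ, ⨆ _ : 0 < μ, Module.End.eigenspace A.mulVecLin μ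

theorem stmt0 {d : ℕ} (A : Matrix (Fin d) (Fin d) ℝ) (hA : A.IsSymm)
    (hdim : Module.finrank ℝ (posEigenspace A) ≤ 1) :
    ∀ x y : Fin d → ℝ, 0 ≤ y ⬝ᵥ A.mulVec y →
      (x ⬝ᵥ A.mulVec y) ^ 2 ≥ (x ⬝ᵥ A.mulVec x) * (y ⬝ᵥ A.mulVec y) := by
  have hH : A.IsHermitian := by
    rw [Matrix.IsHermitian, conjTranspose_eq_transpose_of_trivial]; exact hA
  set μ : Fin d → ℝ := hH.eigenvalues with hμdef
  set v : Fin d → (Fin d → ℝ) := fun i => ⇑(hH.eigenvectorBasis i) with hvdef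
  have hAv : ∀ i, A *ᵥ v i = μ i • v i := fun i => hH.mulVec_eigenvectorBasis i
  have hortho : ∀ i j, v i ⬝ᵥ v j = if i = j then 1 else 0 := by
    intro i j
    have h := orthonormal_iff_ite.mp hH.eigenvectorBasis.orthonormal i j
    simpa [PiLp.inner_apply, dotProduct, hvdef, mul_comm] using h
  have hrepr : ∀ b : Fin d → ℝ, ∑ i, (v i ⬝ᵥ b) • v i = b := by
    intro b
    have h := congrArg WithLp.ofLp (hH.eigenvectorBasis.sum_repr' (WithLp.toLp 2 b))
    simpa [PiLp.inner_apply, dotProduct, hvdef, mul_comm] using h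
  have key : ∀ a b : Fin d → ℝ, a ⬝ᵥ A *ᵥ b = ∑ i, μ i * (a ⬝ᵥ v i) * (b ⬝ᵥ v i) := by
    intro a b
    conv_lhs => rw [← hrepr b]
    have hds : ∀ (a : Fin d → ℝ) (f : Fin d → (Fin d → ℝ)),
        a ⬝ᵥ (∑ i, f i) = ∑ i, a ⬝ᵥ f i := by
      intro a f
      simp only [dotProduct, Finset.sum_apply, Finset.mul_sum]
      rw [Finset.sum_comm]
    have h2 : A *ᵥ (∑ i, (v i ⬝ᵥ b) • v i) = ∑ i, (v i ⬝ᵥ b) • (μ i • v i) := by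
      rw [← A.mulVecLin_apply, map_sum]
      simp only [A.mulVecLin_apply, Matrix.mulVec_smul, hAv]
    rw [h2, hds a]
    refine Finset.sum_congr rfl fun i _ => ?_
    rw [dotProduct_smul, dotProduct_smul, smul_eq_mul, smul_eq_mul, dotProduct_comm (v i) b]
    ring
  have huniq : ∀ i j, 0 < μ i → 0 < μ j → i = j := by
    intro i j hi hj
    by_contra hne
    have hmem : ∀ k, 0 < μ k → v k ∈ posEigenspace A := by
      intro k hk
      have h1 : v k ∈ Module.End.eigenspace A.mulVecLin (μ k) := by
        rw [Module.End.mem_eigenspace_iff, mulVecLin_apply]; exact hAv k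
      exact Submodule.mem_iSup_of_mem (μ k) (Submodule.mem_iSup_of_mem hk h1)
    obtain ⟨v₀, hgen⟩ := finrank_le_one_iff.mp hdim
    obtain ⟨c, hc⟩ := hgen ⟨v i, hmem i hi⟩
    obtain ⟨c', hc'⟩ := hgen ⟨v j, hmem j hj⟩
    set w : Fin d → ℝ := (v₀ : Fin d → ℝ) with hwdef
    have hci : c • w = v i := congrArg Subtype.val hc
    have hcj : c' • w = v j := congrArg Subtype.val hc'
    have h1 : c * (c * (w ⬝ᵥ w)) = 1 := by
      have h := hortho i i
      rw [if_pos rfl, ← hci, smul_dotProduct, dotProduct_smul, smul_eq_mul, smul_eq_mul] at h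
      exact h
    have h2 : c' * (c' * (w ⬝ᵥ w)) = 1 := by
      have h := hortho j j
      rw [if_pos rfl, ← hcj, smul_dotProduct, dotProduct_smul, smul_eq_mul, smul_eq_mul] at h
      exact h
    have h3 : c * (c' * (w ⬝ᵥ w)) = 0 := by
      have h := hortho i j
      rw [if_neg hne, ← hci, ← hcj, smul_dotProduct, dotProduct_smul, smul_eq_mul,
        smul_eq_mul] at h
      exact h
    have hr : (c * (c' * (w ⬝ᵥ w))) * (c * (c' * (w ⬝ᵥ w)))
        = (c * (c * (w ⬝ᵥ w))) * (c' * (c' * (w ⬝ᵥ w))) := by ring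
    rw [h1, h2, h3] at hr
    norm_num at hr
  intro x y hy
  by_contra hcon
  push_neg at hcon
  have hyy : 0 < y ⬝ᵥ A *ᵥ y := by
    rcases eq_or_lt_of_le hy with h | h
    · rw [← h, mul_zero] at hcon
      exact absurd (sq_nonneg _) (not_le.mpr hcon)
    · exact h
  by_cases hex : ∃ k, 0 < μ k
  · obtain ⟨k, hk⟩ := hex
    set s := y ⬝ᵥ v k with hs
    set t := -(x ⬝ᵥ v k) with ht
    have hsne : s ≠ 0 := by
      intro h0
      have hle : y ⬝ᵥ A *ᵥ y ≤ 0 := by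
        rw [key y y]
        apply Finset.sum_nonpos
        intro i _
        by_cases hi : 0 < μ i
        · rw [huniq i k hi hk, ← hs, h0]; ring_nf; exact le_rfl
        · push_neg at hi
          nlinarith [sq_nonneg (y ⬝ᵥ v i)]
      linarith
    set w := s • x + t • y with hw
    have hwv : ∀ i, w ⬝ᵥ v i = s * (x ⬝ᵥ v i) + t * (y ⬝ᵥ v i) := by
      intro i
      rw [hw, add_dotProduct, smul_dotProduct, smul_dotProduct, smul_eq_mul, smul_eq_mul]
    have hwk : w ⬝ᵥ v k = 0 := by
      rw [hwv k, ht]; ring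
    have hle : w ⬝ᵥ A *ᵥ w ≤ 0 := by
      rw [key w w]
      apply Finset.sum_nonpos
      intro i _
      by_cases hi : 0 < μ i
      · rw [huniq i k hi hk, hwk]; ring_nf; exact le_rfl
      · push_neg at hi
        nlinarith [sq_nonneg (w ⬝ᵥ v i)]
    have hexp : w ⬝ᵥ A *ᵥ w = s * s * (x ⬝ᵥ A *ᵥ x) + 2 * (s * t) * (x ⬝ᵥ A *ᵥ y)
        + t * t * (y ⬝ᵥ A *ᵥ y) := by
      rw [key w w, key x x, key x y, key y y, Finset.mul_sum, Finset.mul_sum, Finset.mul_sum,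
        ← Finset.sum_add_distrib, ← Finset.sum_add_distrib]
      refine Finset.sum_congr rfl fun i _ => ?_
      rw [hwv i]; ring
    have hs2 : 0 < s * s := mul_self_pos.mpr hsne
    have hfin : 0 < w ⬝ᵥ A *ᵥ w := by
      rw [hexp]
      nlinarith [sq_nonneg (s * (x ⬝ᵥ A *ᵥ y) + t * (y ⬝ᵥ A *ᵥ y)),
        mul_pos hs2 (sub_pos.mpr hcon), hyy]
    linarith
  · push_neg at hex
    have hle : y ⬝ᵥ A *ᵥ y ≤ 0 := by
      rw [key y y]
      apply Finset.sum_nonpos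
      intro i _
      nlinarith [sq_nonneg (y ⬝ᵥ v i), hex i]
    linarith
end

section
/- Let A be a symmetric matrix on ℝ^d such that ⟨x, Ay⟩² ≥ ⟨x, Ax⟩⟨y, Ay⟩ holds for all x, y with ⟨y, Ay⟩ ≥ 0. Then the positive eigenspace of A has dimension at most one. -/
open Matrix

lemma symm_dot {d : ℕ} (A : Matrix (Fin d) (Fin d) ℝ) (hA : A.IsSymm)
    (x y : Fin d → ℝ) : x ⬝ᵥ A.mulVec y = A.mulVec x ⬝ᵥ y := by
  rw [Matrix.dotProduct_mulVec, ← Matrix.mulVec_transpose, hA]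

lemma dot_self_pos {d : ℕ} {v : Fin d → ℝ} (hv : v ≠ 0) : 0 < v ⬝ᵥ v := by
  have := Matrix.dotProduct_self_star_pos_iff (v := v) |>.mpr hv
  simpa using this

theorem stmt1 {d : ℕ} (A : Matrix (Fin d) (Fin d) ℝ) (hA : A.IsSymm)
    (h : ∀ x y : Fin d → ℝ, 0 ≤ y ⬝ᵥ A.mulVec y →
      (x ⬝ᵥ A.mulVec y) ^ 2 ≥ (x ⬝ᵥ A.mulVec x) * (y ⬝ᵥ A.mulVec y)) :
    Module.finrank ℝ (posEigenspace A) ≤ 1 := by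
  by_cases hw : ∃ μ : ℝ, 0 < μ ∧ ∃ w : Fin d → ℝ, w ≠ 0 ∧ A.mulVec w = μ • w
  · obtain ⟨μ, hμ, w, hw0, hwe⟩ := hw
    have hww : 0 < w ⬝ᵥ w := dot_self_pos hw0
    have hwAw : w ⬝ᵥ A.mulVec w = μ * (w ⬝ᵥ w) := by
      rw [hwe, dotProduct_smul, smul_eq_mul]
    have key : posEigenspace A ≤ Submodule.span ℝ {w} := by
      rw [posEigenspace]
      refine iSup_le fun ν => iSup_le fun hν v hv => ?_
      rw [Module.End.mem_eigenspace_iff] at hv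
      have hv' : A.mulVec v = ν • v := hv
      by_cases hνμ : ν = μ
      · subst hνμ
        set c : ℝ := (w ⬝ᵥ v) / (w ⬝ᵥ w) with hc
        set y : Fin d → ℝ := v - c • w with hy
        have hAy : A.mulVec y = ν • y := by
          rw [hy, Matrix.mulVec_sub, Matrix.mulVec_smul, hv', hwe, smul_sub, smul_comm]
        have hwy : w ⬝ᵥ y = 0 := by
          rw [hy, dotProduct_sub, dotProduct_smul, smul_eq_mul, hc,
            div_mul_cancel₀ _ (ne_of_gt hww), sub_self]
        have hy0 : y = 0 := by
          by_contra hy0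
          have hyy : 0 < y ⬝ᵥ y := dot_self_pos hy0
          have h1 : y ⬝ᵥ A.mulVec y = ν * (y ⬝ᵥ y) := by
            rw [hAy, dotProduct_smul, smul_eq_mul]
          have h2 : w ⬝ᵥ A.mulVec y = 0 := by
            rw [hAy, dotProduct_smul, smul_eq_mul, hwy, mul_zero]
          have := h w y (by rw [h1]; positivity)
          rw [h2, hwAw, h1] at this
          have hpos : 0 < ν * (w ⬝ᵥ w) * (ν * (y ⬝ᵥ y)) := by positivity
          norm_num at this
          linarith
        have : v = c • w := by
          have := sub_eq_zero.mp hy0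
          simpa using this
        rw [this]
        exact Submodule.smul_mem _ _ (Submodule.mem_span_singleton_self w)
      · -- distinct eigenvalues: orthogonal
        have horth : w ⬝ᵥ v = 0 := by
          have e1 : w ⬝ᵥ A.mulVec v = ν * (w ⬝ᵥ v) := by
            rw [hv', dotProduct_smul, smul_eq_mul]
          have e2 : w ⬝ᵥ A.mulVec v = μ * (w ⬝ᵥ v) := by
            rw [symm_dot A hA, hwe, smul_dotProduct, smul_eq_mul]
          have : (ν - μ) * (w ⬝ᵥ v) = 0 := by linarith
          rcases mul_eq_zero.mp this with h' | h'
          · exact absurd (sub_eq_zero.mp h') hνμ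
          · exact h'
        have hv0 : v = 0 := by
          by_contra hv0
          have hvv : 0 < v ⬝ᵥ v := dot_self_pos hv0
          have h1 : v ⬝ᵥ A.mulVec v = ν * (v ⬝ᵥ v) := by
            rw [hv', dotProduct_smul, smul_eq_mul]
          have h2 : w ⬝ᵥ A.mulVec v = 0 := by
            rw [hv', dotProduct_smul, smul_eq_mul, horth, mul_zero]
          have := h w v (by rw [h1]; positivity)
          rw [h2, hwAw, h1] at this
          have hpos : 0 < μ * (w ⬝ᵥ w) * (ν * (v ⬝ᵥ v)) := by positivity
          norm_num at this
          linarith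
        rw [hv0]; exact Submodule.zero_mem _
    calc Module.finrank ℝ (posEigenspace A)
        ≤ Module.finrank ℝ (Submodule.span ℝ ({w} : Set (Fin d → ℝ))) :=
          Submodule.finrank_mono key
      _ = 1 := finrank_span_singleton hw0
  · push_neg at hw
    have : posEigenspace A = ⊥ := by
      rw [posEigenspace]
      refine le_bot_iff.mp (iSup_le fun ν => iSup_le fun hν v hv => ?_)
      rw [Module.End.mem_eigenspace_iff] at hv
      by_contra hv0
      exact (hw ν hν v (by simpa using hv0)) hv
    rw [this]
    simp
end

section
/- Let A be a symmetric matrix on ℝ^d and suppose there exists a vector w such that ⟨x, Ax⟩ ≤ 0 for all x with ⟨x, Aw⟩ = 0. Then ⟨x, Ay⟩² ≥ ⟨x, Ax⟩⟨y, Ay⟩ for all x, y with ⟨y, Ay⟩ ≥ 0. -/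
open Matrix

theorem stmt2 {d : ℕ} (A : Matrix (Fin d) (Fin d) ℝ) (hA : A.IsSymm)
    (w : Fin d → ℝ) (hw : ∀ x : Fin d → ℝ, x ⬝ᵥ A.mulVec w = 0 → x ⬝ᵥ A.mulVec x ≤ 0) :
    ∀ x y : Fin d → ℝ, 0 ≤ y ⬝ᵥ A.mulVec y →
      (x ⬝ᵥ A.mulVec y) ^ 2 ≥ (x ⬝ᵥ A.mulVec x) * (y ⬝ᵥ A.mulVec y) := by
  have symm : ∀ u v : Fin d → ℝ, u ⬝ᵥ A.mulVec v = v ⬝ᵥ A.mulVec u := by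
    intro u v
    rw [dotProduct_mulVec, ← mulVec_transpose, hA.eq, dotProduct_comm]
  have lin : ∀ (u v : Fin d → ℝ), (u + v) ⬝ᵥ A.mulVec (u + v)
      = u ⬝ᵥ A.mulVec u + 2 * (u ⬝ᵥ A.mulVec v) + v ⬝ᵥ A.mulVec v := by
    intro u v
    simp [mulVec_add, dotProduct_add, add_dotProduct, symm v u]
    ring
  have sm : ∀ (a : ℝ) (u v : Fin d → ℝ),
      (a • u) ⬝ᵥ A.mulVec v = a * (u ⬝ᵥ A.mulVec v) := by
    intro a u v
    simp [smul_dotProduct]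
  have sm2 : ∀ (a : ℝ) (u v : Fin d → ℝ),
      u ⬝ᵥ A.mulVec (a • v) = a * (u ⬝ᵥ A.mulVec v) := by
    intro a u v
    rw [symm, sm, symm]
  have exp : ∀ (a b : ℝ) (u v : Fin d → ℝ),
      (a • u + b • v) ⬝ᵥ A.mulVec (a • u + b • v)
      = a ^ 2 * (u ⬝ᵥ A.mulVec u) + 2 * a * b * (u ⬝ᵥ A.mulVec v)
        + b ^ 2 * (v ⬝ᵥ A.mulVec v) := by
    intro a b u v
    rw [lin]; simp only [sm, sm2]
    ring
  intro x y hy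
  by_contra h
  push_neg at h
  have hy0 : 0 < y ⬝ᵥ A.mulVec y := by
    rcases lt_or_eq_of_le hy with h' | h'
    · exact h'
    · rw [← h', mul_zero] at h
      exact absurd h (not_lt.2 (sq_nonneg _))
  by_cases hyw : y ⬝ᵥ A.mulVec w = 0
  · exact absurd (hw y hyw) (not_le.2 hy0)
  · set Bxx := x ⬝ᵥ A.mulVec x with hBxx
    set Byy := y ⬝ᵥ A.mulVec y with hByy
    set Bxy := x ⬝ᵥ A.mulVec y with hBxy
    set z : Fin d → ℝ := Byy • x + (-Bxy) • y with hz
    have hzz : z ⬝ᵥ A.mulVec z = Byy * (Bxx * Byy - Bxy ^ 2) := by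
      rw [hz, exp]; ring
    have hzzpos : 0 < z ⬝ᵥ A.mulVec z := by
      rw [hzz]; nlinarith
    have hzy : y ⬝ᵥ A.mulVec z = 0 := by
      rw [symm, hz, add_dotProduct, sm, sm]
      rw [← hBxy, ← hByy]
      ring
    set a : ℝ := z ⬝ᵥ A.mulVec w with ha
    set b : ℝ := y ⬝ᵥ A.mulVec w with hb
    set v : Fin d → ℝ := a • y + (-b) • z with hv
    have hvw : v ⬝ᵥ A.mulVec w = 0 := by
      rw [hv, add_dotProduct, sm, sm]
      ring
    have hvv := hw v hvw
    have hvv2 : v ⬝ᵥ A.mulVec v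
        = a ^ 2 * Byy + (-b) ^ 2 * (z ⬝ᵥ A.mulVec z) := by
      rw [hv, exp, hzy]
      ring
    have hb0 : b ≠ 0 := hyw
    nlinarith [sq_nonneg a, sq_nonneg b, mul_pos hzzpos (mul_self_pos.2 hb0)]
end

section
/- Let A be a symmetric matrix on ℝ^d whose positive eigenspace has dimension at most one. Then there exists a vector w such that ⟨x, Ax⟩ ≤ 0 for all x with ⟨x, Aw⟩ = 0. -/
open Matrix RealInnerProductSpace

theorem stmt3 {d : ℕ} (A : Matrix (Fin d) (Fin d) ℝ) (hA : A.IsSymm)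
    (hdim : Module.finrank ℝ (posEigenspace A) ≤ 1) :
    ∃ w : Fin d → ℝ, ∀ x : Fin d → ℝ, x ⬝ᵥ A.mulVec w = 0 → x ⬝ᵥ A.mulVec x ≤ 0 := by
  classical
  have hA' : A.IsHermitian := by
    rw [Matrix.IsHermitian, conjTranspose_eq_transpose_of_trivial]; exact hA
  set b := hA'.eigenvectorBasis with hb
  set μ := hA'.eigenvalues with hμ
  -- decomposition of any vector in the eigenbasis
  have hdecomp : ∀ x : Fin d → ℝ, x = ∑ i, (⇑(b i) ⬝ᵥ x) • ⇑(b i) := by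
    intro x
    have h := b.sum_repr' ((WithLp.equiv 2 (Fin d → ℝ)).symm x)
    have h2 : ∀ i, ⟪b i, (WithLp.equiv 2 (Fin d → ℝ)).symm x⟫ = ⇑(b i) ⬝ᵥ x := by
      intro i; simp [dotProduct, PiLp.inner_apply, RCLike.inner_apply, mul_comm]
    simp_rw [h2] at h
    have h3 := congrArg (WithLp.ofLp (p := 2)) h.symm
    simpa [WithLp.ofLp_sum, WithLp.ofLp_smul] using h3
  have dsum : ∀ (x : Fin d → ℝ) (v : Fin d → Fin d → ℝ),
      x ⬝ᵥ (∑ i, v i) = ∑ i, x ⬝ᵥ v i := by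
    intro x v
    simp only [dotProduct, Finset.sum_apply, Finset.mul_sum]
    exact Finset.sum_comm
  have msum : ∀ v : Fin d → Fin d → ℝ, A *ᵥ (∑ i, v i) = ∑ i, A *ᵥ v i := by
    intro v
    simp only [← mulVecLin_apply, map_sum]
  -- action of A
  have hAx : ∀ x : Fin d → ℝ, A *ᵥ x = ∑ i, (μ i * (⇑(b i) ⬝ᵥ x)) • ⇑(b i) := by
    intro x
    conv_lhs => rw [hdecomp x]
    rw [msum]
    refine Finset.sum_congr rfl fun i _ => ?_
    rw [mulVec_smul, hA'.mulVec_eigenvectorBasis, smul_smul, mul_comm]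
  -- quadratic form formula
  have hquad : ∀ x : Fin d → ℝ, x ⬝ᵥ A *ᵥ x = ∑ i, μ i * (⇑(b i) ⬝ᵥ x) ^ 2 := by
    intro x
    rw [hAx x, dsum]
    refine Finset.sum_congr rfl fun i _ => ?_
    rw [dotProduct_smul, smul_eq_mul, dotProduct_comm]
    ring
  by_cases hpos : ∀ i, μ i ≤ 0
  · -- no positive eigenvalue: w = 0 works
    refine ⟨0, fun x _ => ?_⟩
    rw [hquad x]
    exact Finset.sum_nonpos fun i _ =>
      mul_nonpos_of_nonpos_of_nonneg (hpos i) (sq_nonneg _)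
  · push_neg at hpos
    obtain ⟨i0, hi0⟩ := hpos
    -- eigenvectors with positive eigenvalue lie in posEigenspace
    have hmem : ∀ j, 0 < μ j → ⇑(b j) ∈ posEigenspace A := by
      intro j hj
      refine Submodule.mem_iSup_of_mem (μ j) (Submodule.mem_iSup_of_mem hj ?_)
      rw [Module.End.mem_eigenspace_iff, mulVecLin_apply, hA'.mulVec_eigenvectorBasis]
    -- orthonormality in dot-product form
    have hortho : ∀ i j, ⇑(b i) ⬝ᵥ ⇑(b j) = if i = j then 1 else 0 := by
      intro i j
      have := orthonormal_iff_ite.mp b.orthonormal i j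
      have h2 : ⟪b i, b j⟫ = ⇑(b i) ⬝ᵥ ⇑(b j) := by
        simp [dotProduct, PiLp.inner_apply, RCLike.inner_apply, mul_comm]
      rw [h2] at this
      simpa using this
    -- all other eigenvalues are nonpositive
    have honly : ∀ j, j ≠ i0 → μ j ≤ 0 := by
      intro j hj
      by_contra hjpos
      push_neg at hjpos
      have li : LinearIndependent ℝ ![⇑(b i0), ⇑(b j)] := by
        rw [LinearIndependent.pair_iff]
        intro s t hst
        have h1 : ⇑(b i0) ⬝ᵥ (s • ⇑(b i0) + t • ⇑(b j)) = s := by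
          simp [dotProduct_smul, hortho, hj.symm]
        have h2 : ⇑(b j) ⬝ᵥ (s • ⇑(b i0) + t • ⇑(b j)) = t := by
          simp [dotProduct_smul, hortho, hj]
        rw [hst] at h1 h2
        simp only [dotProduct_zero] at h1 h2
        exact ⟨h1.symm, h2.symm⟩
      have hle : Submodule.span ℝ (Set.range ![⇑(b i0), ⇑(b j)]) ≤ posEigenspace A := by
        rw [Submodule.span_le]
        rintro v ⟨k, rfl⟩
        fin_cases k
        · exact hmem i0 hi0
        · exact hmem j hjpos
      have h2 : Module.finrank ℝ (Submodule.span ℝ (Set.range ![⇑(b i0), ⇑(b j)])) = 2 := by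
        rw [finrank_span_eq_card li]; simp
      have h3 := Submodule.finrank_mono hle
      rw [h2] at h3
      exact absurd (h3.trans hdim) (by norm_num)
    -- the eigenvector for the positive eigenvalue works
    refine ⟨⇑(b i0), fun x hx => ?_⟩
    have hc0 : ⇑(b i0) ⬝ᵥ x = 0 := by
      rw [hAx, dsum] at hx
      have : ∀ i, x ⬝ᵥ (μ i * (⇑(b i) ⬝ᵥ ⇑(b i0))) • ⇑(b i)
          = if i = i0 then μ i0 * (⇑(b i0) ⬝ᵥ x) else 0 := by
        intro i
        rw [dotProduct_smul, smul_eq_mul, hortho, dotProduct_comm x]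
        by_cases h : i = i0 <;> simp [h]
      simp_rw [this] at hx
      rw [Finset.sum_ite_eq' Finset.univ i0] at hx
      simp at hx
      rcases hx with h | h
      · exact absurd h (ne_of_gt hi0)
      · exact h
    rw [hquad x]
    apply Finset.sum_nonpos
    intro i _
    by_cases h : i = i0
    · subst h; rw [hc0]; simp
    · exact mul_nonpos_of_nonpos_of_nonneg (honly i h) (sq_nonneg _)
end

section
/- For any 2×2 real symmetric matrices A and B with B positive definite, the mixed discriminant satisfies D(A,B)² ≥ D(A,A)·D(B,B), where D(A,B) = (det(A+B) − det(A) − det(B))/2. -/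
open Matrix

theorem stmt5 (A B : Matrix (Fin 2) (Fin 2) ℝ) (hA : A.IsSymm) (hB : B.PosDef) :
    ((det (A + B) - det A - det B) / 2) ^ 2 ≥ det A * det B := by
  have hAsym : A 1 0 = A 0 1 := by
    have := hA.apply 0 1; simpa using this
  have hBsym : B 1 0 = B 0 1 := by
    have := hB.isHermitian.apply 0 1; simpa using this
  have hp : 0 < B 0 0 := by
    have := hB.dotProduct_mulVec_pos (x := fun i => if i = 0 then 1 else 0) (by intro h; simpa using congrFun h 0)
    simpa [Matrix.mulVec, dotProduct, Fin.sum_univ_two] using this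
  have hdet : 0 < B.det := hB.det_pos
  simp only [Matrix.det_fin_two, Matrix.add_apply] at *
  rw [hAsym, hBsym] at *
  set a := A 0 0; set b := A 0 1; set c := A 1 1
  set p := B 0 0; set q := B 0 1; set s := B 1 1
  nlinarith [sq_nonneg (p*(a*s - c*p) + 2*q*(b*p - a*q)),
    mul_nonneg (sq_nonneg (b*p - a*q)) hdet.le, mul_pos hp hp, hdet.le]
end

section
/- If M₁, …, M_m are m×m real positive semidefinite matrices, then their mixed discriminant D(M₁,…,M_m) is nonnegative. -/
open Matrix Finset

lemma det_of_sum_cols {m : ℕ} (σ : Equiv.Perm (Fin m)) (c : Fin m → Fin m → ℝ)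
    (v : Fin m → Fin m → Fin m → ℝ) :
    (Matrix.of fun i j => ∑ l, c (σ j) l * v (σ j) l i * v (σ j) l j).det
      = ∑ f : Fin m → Fin m,
          (∏ j, c (σ j) (f j) * v (σ j) (f j) j) *
            (Matrix.of fun j i => v (σ j) (f j) i).det := by
  rw [← Matrix.det_transpose]
  have h1 : (Matrix.of fun i j => ∑ l, c (σ j) l * v (σ j) l i * v (σ j) l j)ᵀ
      = fun j => ∑ l : Fin m, (c (σ j) l * v (σ j) l j) • v (σ j) l := by
    funext j i
    simp [Matrix.transpose_apply, Finset.sum_apply]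
    exact Finset.sum_congr rfl fun l _ => by ring
  rw [h1]
  show ((Matrix.detRowAlternating (n := Fin m) (R := ℝ)).toMultilinearMap
      (fun j => ∑ l : Fin m, (c (σ j) l * v (σ j) l j) • v (σ j) l)) = _
  rw [(Matrix.detRowAlternating (n := Fin m) (R := ℝ)).toMultilinearMap.map_sum
    (g := fun j l => (c (σ j) l * v (σ j) l j) • v (σ j) l)]
  refine Finset.sum_congr rfl fun f _ => ?_
  rw [(Matrix.detRowAlternating (n := Fin m) (R := ℝ)).toMultilinearMap.map_smul_univ
    (fun j => c (σ j) (f j) * v (σ j) (f j) j) (fun j => v (σ j) (f j))]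
  rw [smul_eq_mul]
  rfl

lemma sum_det_nonneg {m : ℕ} (c : Fin m → Fin m → ℝ) (hc : ∀ k l, 0 ≤ c k l)
    (v : Fin m → Fin m → Fin m → ℝ) :
    0 ≤ ∑ σ : Equiv.Perm (Fin m),
        (Matrix.of fun i j => ∑ l, c (σ j) l * v (σ j) l i * v (σ j) l j).det := by
  simp only [det_of_sum_cols]
  have h2 : ∀ σ : Equiv.Perm (Fin m),
      (∑ f : Fin m → Fin m, (∏ j, c (σ j) (f j) * v (σ j) (f j) j) *
          (Matrix.of fun j i => v (σ j) (f j) i).det)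
      = ∑ h : Fin m → Fin m, (∏ j, c (σ j) (h (σ j)) * v (σ j) (h (σ j)) j) *
          (Matrix.of fun j i => v (σ j) (h (σ j)) i).det := by
    intro σ
    refine (Fintype.sum_equiv (Equiv.arrowCongr σ.symm (Equiv.refl (Fin m)))
      _ _ fun h => ?_).symm
    rfl
  simp only [h2]
  rw [Finset.sum_comm]
  refine Finset.sum_nonneg fun h _ => ?_
  set W : Matrix (Fin m) (Fin m) ℝ := Matrix.of fun k i => v k (h k) i with hW
  have hterm : ∀ σ : Equiv.Perm (Fin m),
      (∏ j, c (σ j) (h (σ j)) * v (σ j) (h (σ j)) j) *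
          (Matrix.of fun j i => v (σ j) (h (σ j)) i).det
      = (∏ k, c k (h k)) * W.det *
          (((Equiv.Perm.sign σ : ℤ) : ℝ) * ∏ j, W (σ j) j) := by
    intro σ
    have e1 : (Matrix.of fun j i => v (σ j) (h (σ j)) i) = W.submatrix σ id := rfl
    have e2 : (∏ j, c (σ j) (h (σ j))) = ∏ k, c k (h k) :=
      Equiv.prod_comp σ (fun k => c k (h k))
    rw [e1, Matrix.det_permute, Finset.prod_mul_distrib, e2]
    have : ∀ j, v (σ j) (h (σ j)) j = W (σ j) j := fun j => rfl
    simp only [this]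
    ring
  simp only [hterm]
  rw [← Finset.mul_sum, ← Matrix.det_apply']
  have : (0:ℝ) ≤ ∏ k, c k (h k) := Finset.prod_nonneg fun k _ => hc k (h k)
  calc (0:ℝ) ≤ (∏ k, c k (h k)) * (W.det * W.det) :=
        mul_nonneg this (mul_self_nonneg _)
    _ = (∏ k, c k (h k)) * W.det * W.det := by ring

lemma entry_decomp {m : ℕ} (A : Matrix (Fin m) (Fin m) ℝ) (hA : A.IsHermitian) (i j : Fin m) :
    A i j = ∑ l, hA.eigenvalues l *
      ((hA.eigenvectorUnitary : Matrix (Fin m) (Fin m) ℝ) i l) *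
      ((hA.eigenvectorUnitary : Matrix (Fin m) (Fin m) ℝ) j l) := by
  conv_lhs => rw [hA.spectral_theorem]
  simp [Matrix.mul_apply, Matrix.diagonal_apply, Matrix.star_apply, Finset.sum_mul,
    mul_comm, mul_assoc, mul_left_comm]

/-- The mixed discriminant of an `m`-tuple of `m × m` real matrices: the symmetric
multilinear polarization of the determinant, so that
`det (λ₁ • M₁ + ⋯ + λₘ • Mₘ) = ∑ D(M_{i₁}, …, M_{iₘ}) λ_{i₁} ⋯ λ_{iₘ}`. -/
noncomputable def mixedDisc {m : ℕ} (M : Fin m → Matrix (Fin m) (Fin m) ℝ) : ℝ :=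
  (Nat.factorial m : ℝ)⁻¹ *
    ∑ σ : Equiv.Perm (Fin m), (Matrix.of fun i j => M (σ j) i j).det

theorem stmt8 {m : ℕ} (M : Fin m → Matrix (Fin m) (Fin m) ℝ)
    (hM : ∀ i, (M i).PosSemidef) : 0 ≤ mixedDisc M := by
  unfold mixedDisc
  have key : 0 ≤ ∑ σ : Equiv.Perm (Fin m), (Matrix.of fun i j => M (σ j) i j).det := by
    set c : Fin m → Fin m → ℝ := fun k l => (hM k).1.eigenvalues l with hc
    set v : Fin m → Fin m → Fin m → ℝ :=
      fun k l i => ((hM k).1.eigenvectorUnitary : Matrix (Fin m) (Fin m) ℝ) i l with hv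
    have hrw : ∀ σ : Equiv.Perm (Fin m), (Matrix.of fun i j => M (σ j) i j)
        = Matrix.of fun i j => ∑ l, c (σ j) l * v (σ j) l i * v (σ j) l j := by
      intro σ; ext i j
      exact entry_decomp (M (σ j)) (hM (σ j)).1 i j
    simp only [hrw]
    exact sum_det_nonneg c (fun k l => (hM k).eigenvalues_nonneg l) v
  exact mul_nonneg (by positivity) key
end

section
/- If M₁ is positive semidefinite and nonzero, and M₂, …, M_m are positive definite m×m real matrices, then the mixed discriminant D(M₁, M₂, …, M_m) is strictly positive. -/
open Matrix

/-- The matrix whose `i`-th row is the `κ i`-th row of `B i`. -/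
private def rowsel {n : ℕ} (B : Fin n → Matrix (Fin n) (Fin n) ℝ) (κ : Fin n → Fin n) :
    Matrix (Fin n) (Fin n) ℝ := Matrix.of fun i j => B i (κ i) j

private lemma det_step {n : ℕ} (B : Fin n → Matrix (Fin n) (Fin n) ℝ) (σ : Equiv.Perm (Fin n)) :
    (Matrix.of fun i j => ((B (σ j))ᴴ * B (σ j)) i j).det
      = ∑ r : Fin n → Fin n, (∏ j, B (σ j) (r j) j) *
          (((Equiv.Perm.sign σ : ℤ) : ℝ) * (rowsel B (r ∘ ⇑σ⁻¹)).det) := by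
  rw [← Matrix.det_transpose]
  have h1 : (Matrix.of fun i j => ((B (σ j))ᴴ * B (σ j)) i j)ᵀ
      = Matrix.of fun j => ∑ k, B (σ j) k j • B (σ j) k := by
    ext j i
    simp [Matrix.mul_apply, Matrix.conjTranspose_apply, mul_comm, Finset.sum_apply]
  rw [h1]
  have h2 : (Matrix.of fun j => ∑ k, B (σ j) k j • B (σ j) k).det
      = (Matrix.detRowAlternating).toMultilinearMap
          (fun j => ∑ k : Fin n, B (σ j) k j • B (σ j) k) := rfl
  rw [h2, MultilinearMap.map_sum]
  refine Finset.sum_congr rfl fun r _ => ?_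
  rw [MultilinearMap.map_smul_univ]
  have h4 : (Matrix.detRowAlternating).toMultilinearMap (fun j => B (σ j) (r j))
      = ((rowsel B (r ∘ ⇑σ⁻¹)).submatrix σ id).det := by
    show (Matrix.of fun j => B (σ j) (r j)).det = _
    congr 1
    ext j i
    simp [rowsel, Matrix.submatrix_apply]
  rw [h4, Matrix.det_permute]
  simp [smul_eq_mul]

private lemma key_identity {n : ℕ} (B : Fin n → Matrix (Fin n) (Fin n) ℝ) :
    ∑ σ : Equiv.Perm (Fin n), (Matrix.of fun i j => ((B (σ j))ᴴ * B (σ j)) i j).det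
      = ∑ κ : Fin n → Fin n, (rowsel B κ).det ^ 2 := by
  have step2 : ∀ σ : Equiv.Perm (Fin n),
      (Matrix.of fun i j => ((B (σ j))ᴴ * B (σ j)) i j).det
        = ∑ κ : Fin n → Fin n,
            (((Equiv.Perm.sign σ : ℤ) : ℝ) * ∏ p, B p (κ p) (σ⁻¹ p)) * (rowsel B κ).det := by
    intro σ
    rw [det_step]
    rw [← Equiv.sum_comp (Equiv.arrowCongr σ (Equiv.refl (Fin n)))
      (fun κ => (((Equiv.Perm.sign σ : ℤ) : ℝ) * ∏ p, B p (κ p) (σ⁻¹ p)) * (rowsel B κ).det)]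
    refine Finset.sum_congr rfl fun κ _ => ?_
    have hcomp : (Equiv.arrowCongr σ (Equiv.refl (Fin n))) κ = κ ∘ ⇑σ⁻¹ := by
      ext j; simp [Equiv.arrowCongr]
    rw [hcomp]
    have hprod : (∏ p, B p ((κ ∘ ⇑σ⁻¹) p) (σ⁻¹ p)) = ∏ j, B (σ j) (κ j) j := by
      rw [← Equiv.prod_comp σ (fun p => B p ((κ ∘ ⇑σ⁻¹) p) (σ⁻¹ p))]
      refine Finset.prod_congr rfl fun j _ => by simp
    rw [hprod]
    ring
  rw [Finset.sum_congr rfl fun σ _ => step2 σ, Finset.sum_comm]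
  refine Finset.sum_congr rfl fun κ _ => ?_
  have inner : ∑ σ : Equiv.Perm (Fin n),
      ((Equiv.Perm.sign σ : ℤ) : ℝ) * ∏ p, B p (κ p) (σ⁻¹ p) = (rowsel B κ).det := by
    calc ∑ σ : Equiv.Perm (Fin n), ((Equiv.Perm.sign σ : ℤ) : ℝ) * ∏ p, B p (κ p) (σ⁻¹ p)
        = ∑ σ : Equiv.Perm (Fin n), ((Equiv.Perm.sign σ⁻¹ : ℤ) : ℝ) * ∏ p, B p (κ p) (σ⁻¹ p) := by
          simp
      _ = ∑ σ : Equiv.Perm (Fin n), ((Equiv.Perm.sign σ : ℤ) : ℝ) * ∏ p, B p (κ p) (σ p) :=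
          Equiv.sum_comp (Equiv.inv (Equiv.Perm (Fin n)))
            (fun τ => ((Equiv.Perm.sign τ : ℤ) : ℝ) * ∏ p, B p (κ p) (τ p))
      _ = (rowsel B κ).det := by
          rw [← Matrix.det_transpose, Matrix.det_apply']
          refine Finset.sum_congr rfl fun σ _ => ?_
          simp [rowsel, Matrix.transpose_apply]
  rw [← Finset.sum_mul, inner, sq]

private lemma exists_good_rows {m : ℕ} (B : Fin (m + 1) → Matrix (Fin (m + 1)) (Fin (m + 1)) ℝ)
    (h0 : B 0 ≠ 0) (hB : ∀ i, i ≠ 0 → IsUnit (B i)) :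
    ∃ κ : Fin (m + 1) → Fin (m + 1), (rowsel B κ).det ≠ 0 := by
  classical
  obtain ⟨r0, hr0⟩ : ∃ r, B 0 r ≠ 0 := by
    by_contra h
    push_neg at h
    exact h0 (by ext i j; simp [h i])
  have main : ∀ s : Finset (Fin (m + 1)), (0 : Fin (m + 1)) ∉ s →
      ∃ κ : Fin (m + 1) → Fin (m + 1), LinearIndependent ℝ
        (fun i : ↥(insert (0 : Fin (m + 1)) (s : Set (Fin (m + 1)))) => B i (κ i)) := by
    intro s
    induction s using Finset.induction_on with
    | empty =>
      intro _
      refine ⟨fun _ => r0, ?_⟩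
      have : ((∅ : Finset (Fin (m + 1))) : Set (Fin (m + 1))) = (∅ : Set (Fin (m + 1))) := by simp
      rw [this]
      exact (linearIndepOn_insert (s := (∅ : Set (Fin (m + 1)))) (a := (0 : Fin (m + 1)))
        (f := fun i => B i r0) (by simp)).mpr
        ⟨linearIndependent_empty_type, by simp [hr0]⟩
    | @insert a s' ha ih =>
      intro h0s
      have ha0 : a ≠ 0 := fun h => h0s (by simp [h])
      have h0s' : (0 : Fin (m + 1)) ∉ s' := fun h => h0s (Finset.mem_insert_of_mem h)
      obtain ⟨κ, hκ⟩ := ih h0s'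
      set u : Set (Fin (m + 1)) := insert (0 : Fin (m + 1)) (s' : Set (Fin (m + 1))) with hu
      have hau : a ∉ u := by
        simp only [hu, Set.mem_insert_iff, Finset.mem_coe]
        push_neg
        exact ⟨ha0, ha⟩
      have hcard : (insert (0 : Fin (m + 1)) s').card ≤ m := by
        have h2 : (insert a (insert (0 : Fin (m + 1)) s')).card ≤ m + 1 := by
          simpa using Finset.card_le_univ (insert a (insert (0 : Fin (m + 1)) s'))
        rw [Finset.card_insert_of_notMem
          (by simp only [Finset.mem_insert]; push_neg; exact ⟨ha0, ha⟩)] at h2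
        omega
      obtain ⟨r, hr⟩ : ∃ r, B a r ∉ Submodule.span ℝ ((fun i => B i (κ i)) '' u) := by
        by_contra hcon
        push_neg at hcon
        set W := Submodule.span ℝ ((fun i => B i (κ i)) '' u) with hW
        have htop : ∀ x : Fin (m + 1) → ℝ, x ∈ W := by
          intro x
          obtain ⟨y, hy⟩ := (Matrix.vecMul_surjective_iff_isUnit.mpr (hB a ha0)) x
          have hx : x = ∑ i, y i • B a i := by
            rw [← hy]
            ext j
            simp [Matrix.vecMul, dotProduct, Finset.sum_apply]
          rw [hx]
          exact Submodule.sum_mem _ fun i _ => Submodule.smul_mem _ _ (hcon i)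
        have himg : ((fun i => B i (κ i)) '' u)
            = (((insert (0 : Fin (m + 1)) s').image (fun i => B i (κ i)) :
                Finset (Fin (m + 1) → ℝ)) : Set (Fin (m + 1) → ℝ)) := by
          rw [Finset.coe_image, Finset.coe_insert]
        have hle : Module.finrank ℝ W ≤ m := by
          rw [hW, himg]
          refine le_trans (finrank_span_finset_le_card _) ?_
          exact le_trans (Finset.card_image_le) hcard
        have heq : W = ⊤ := by
          rw [Submodule.eq_top_iff']
          exact htop
        rw [heq] at hle
        have hfr : Module.finrank ℝ (Fin (m + 1) → ℝ) = m + 1 := by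
          simp [Module.finrank_fin_fun]
        rw [finrank_top, hfr] at hle
        omega
      refine ⟨Function.update κ a r, ?_⟩
      have hins : (insert (0 : Fin (m + 1))
            ((insert a s' : Finset (Fin (m + 1))) : Set (Fin (m + 1))))
          = insert a u := by
        rw [Finset.coe_insert, Set.insert_comm]
      rw [hins]
      refine (linearIndepOn_insert (s := u) (a := a)
        (f := fun i => B i (Function.update κ a r i)) hau).mpr ⟨?_, ?_⟩
      · have hfam : (fun i : ↥u => B i (Function.update κ a r i)) = fun i : ↥u => B i (κ i) := by
          funext i
          rw [Function.update_of_ne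
            (show (↑i : Fin (m + 1)) ≠ a from fun h => hau (by rw [← h]; exact i.2))]
        show LinearIndependent ℝ (fun i : ↥u => B i (Function.update κ a r i))
        rw [hfam]
        exact hκ
      · have himg : (fun i => B i (Function.update κ a r i)) '' u = (fun i => B i (κ i)) '' u :=
          Set.image_congr fun i hi => by
            rw [Function.update_of_ne (show i ≠ a from fun h => hau (by rw [← h]; exact hi))]
        rw [Function.update_self, himg]
        exact hr
  obtain ⟨κ, hκ⟩ := main (Finset.univ.erase 0) (by simp)
  have huniv : (insert (0 : Fin (m + 1))
      ((Finset.univ.erase (0 : Fin (m + 1)) : Finset (Fin (m + 1))) : Set (Fin (m + 1))))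
      = Set.univ := by
    ext i
    by_cases h : i = 0 <;> simp [h]
  rw [huniv] at hκ
  have hli : LinearIndependent ℝ (fun i : Fin (m + 1) => B i (κ i)) := by
    have := hκ.comp (fun i : Fin (m + 1) => (⟨i, trivial⟩ : ↥(Set.univ : Set (Fin (m + 1)))))
      (fun i j h => congrArg Subtype.val h)
    exact this
  have hunit : IsUnit (rowsel B κ) := by
    rw [← Matrix.linearIndependent_rows_iff_isUnit]
    exact hli
  exact ⟨κ, ((Matrix.isUnit_iff_isUnit_det _).mp hunit).ne_zero⟩

theorem stmt9 {m : ℕ} (M : Fin (m + 1) → Matrix (Fin (m + 1)) (Fin (m + 1)) ℝ)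
    (h0 : (M 0).PosSemidef) (h0ne : M 0 ≠ 0) (hM : ∀ i, i ≠ 0 → (M i).PosDef) :
    0 < mixedDisc M := by
  classical
  have hpsd : ∀ i, (M i).PosSemidef := fun i => by
    rcases eq_or_ne i 0 with rfl | h
    · exact h0
    · exact (hM i h).posSemidef
  choose B hB using fun i => (show ∃ B : Matrix (Fin (m + 1)) (Fin (m + 1)) ℝ, M i = Bᴴ * B by
    open scoped MatrixOrder in
    obtain ⟨B, hB⟩ := CStarAlgebra.nonneg_iff_eq_star_mul_self.mp (hpsd i).nonneg
    exact ⟨B, by rw [hB, star_eq_conjTranspose]⟩)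
  have hB0 : B 0 ≠ 0 := by
    intro h
    apply h0ne
    rw [hB 0, h]
    simp
  have hBu : ∀ i, i ≠ 0 → IsUnit (B i) := by
    intro i hi
    rw [Matrix.isUnit_iff_isUnit_det, isUnit_iff_ne_zero]
    intro hdet
    have hpos := (hM i hi).det_pos
    rw [hB i, Matrix.det_mul, hdet, mul_zero] at hpos
    exact lt_irrefl _ hpos
  have hmd : mixedDisc M
      = ((Nat.factorial (m + 1) : ℝ))⁻¹ *
          ∑ κ : Fin (m + 1) → Fin (m + 1), (rowsel B κ).det ^ 2 := by
    rw [mixedDisc, ← key_identity]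
    congr 1
    refine Finset.sum_congr rfl fun σ _ => ?_
    congr 1
    ext i j
    simp only [Matrix.of_apply]
    rw [hB (σ j)]
  rw [hmd]
  obtain ⟨κ₀, hκ₀⟩ := exists_good_rows B hB0 hBu
  refine mul_pos (by positivity) ?_
  refine Finset.sum_pos' (fun κ _ => sq_nonneg _) ⟨κ₀, Finset.mem_univ _, ?_⟩
  exact (sq_nonneg _).lt_of_ne (Ne.symm (pow_ne_zero 2 hκ₀))
end

section
/- For m×m symmetric matrices M₂,…,M_m and standard basis vector e_i, the mixed discriminant satisfies D(e_i e_i*, M₂, …, M_m) = (1/m) · D(M₂^{⟨i⟩}, …, M_m^{⟨i⟩}), where M^{⟨i⟩} is the (m−1)×(m−1) matrix obtained from M by deleting its i-th row and column. -/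
open Matrix

theorem stmt11 {k : ℕ} (M : Fin k → Matrix (Fin (k + 1)) (Fin (k + 1)) ℝ)
    (hM : ∀ j, (M j).IsSymm) (i : Fin (k + 1)) :
    mixedDisc (Fin.cons (single i i (1 : ℝ)) M) =
      (1 / (k + 1 : ℝ)) *
        mixedDisc (fun j => (M j).submatrix i.succAbove i.succAbove) := by
  classical
  set N : Fin (k + 1) → Matrix (Fin (k + 1)) (Fin (k + 1)) ℝ :=
    Fin.cons (single i i (1 : ℝ)) M with hN
  set f : Equiv.Perm (Fin (k + 1)) → ℝ :=
    fun σ => (Matrix.of fun a b => N (σ b) a b).det with hf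
  set g : Equiv.Perm (Fin k) → ℝ :=
    fun τ => (Matrix.of fun a b =>
      ((M (τ b)).submatrix i.succAbove i.succAbove) a b).det with hg
  -- the embedding of permutations
  set emb : Equiv.Perm (Fin k) → Equiv.Perm (Fin (k + 1)) :=
    fun τ => (finSuccEquiv' i).trans ((Equiv.optionCongr τ).trans
      (finSuccEquiv' (0 : Fin (k + 1))).symm) with hemb
  have hemb_at : ∀ τ, emb τ i = 0 := by
    intro τ
    simp [hemb, finSuccEquiv'_at, finSuccEquiv'_symm_none]
  have hemb_succAbove : ∀ τ c, emb τ (i.succAbove c) = Fin.succ (τ c) := by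
    intro τ c
    simp [hemb, finSuccEquiv'_succAbove, finSuccEquiv'_symm_some, Fin.zero_succAbove]
  -- vanishing off the support
  have hvanish : ∀ σ : Equiv.Perm (Fin (k + 1)), f σ ≠ 0 → σ i = 0 := by
    intro σ hσ
    by_contra h
    apply hσ
    apply Matrix.det_eq_zero_of_column_eq_zero (σ.symm 0)
    intro a
    have hb : σ (σ.symm 0) = 0 := σ.apply_symm_apply 0
    have hbne : σ.symm 0 ≠ i := by
      intro he; exact h (by rw [← he, hb])
    simp only [Matrix.of_apply, hb, hN, Fin.cons_zero]
    rw [Matrix.single_apply_of_ne]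
    tauto
  -- value on the image
  have hval : ∀ τ : Equiv.Perm (Fin k), f (emb τ) = g τ := by
    intro τ
    have hA : ∀ a, (Matrix.of fun a b => N (emb τ b) a b) a i =
        if a = i then (1 : ℝ) else 0 := by
      intro a
      simp only [Matrix.of_apply, hemb_at, hN, Fin.cons_zero]
      by_cases h : a = i
      · subst h; simp [Matrix.single_apply_same]
      · rw [Matrix.single_apply_of_ne]
        · simp [h]
        · tauto
    rw [hf]
    simp only
    rw [Matrix.det_succ_column _ i, Finset.sum_eq_single i]
    · rw [hA i, if_pos rfl]
      have hpow : ((-1 : ℝ)) ^ ((i : ℕ) + (i : ℕ)) = 1 :=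
        Even.neg_one_pow ⟨i, rfl⟩
      rw [hpow, one_mul, one_mul, hg]
      congr 1
      ext a b
      simp only [Matrix.submatrix_apply, Matrix.of_apply, hemb_succAbove, hN,
        Fin.cons_succ]
    · intro a _ ha
      rw [hA a, if_neg ha]; ring
    · intro h; exact absurd (Finset.mem_univ i) h
  -- the sum identity
  have hsum : ∑ σ : Equiv.Perm (Fin (k + 1)), f σ = ∑ τ : Equiv.Perm (Fin k), g τ := by
    rw [← Finset.sum_filter_of_ne (p := fun σ => σ i = 0)
      (fun σ _ h => hvanish σ h)]
    refine (Finset.sum_bij (fun τ _ => emb τ) ?_ ?_ ?_ ?_).symm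
    · intro τ _
      simp [hemb_at τ]
    · intro τ₁ _ τ₂ _ h
      refine Equiv.ext fun c => ?_
      have := congrArg (fun σ : Equiv.Perm (Fin (k + 1)) => σ (i.succAbove c)) h
      simp only [hemb_succAbove] at this
      exact Fin.succ_injective _ this
    · intro σ hσ
      have hσi : σ i = 0 := (Finset.mem_filter.mp hσ).2
      set e : Option (Fin k) ≃ Option (Fin k) :=
        (finSuccEquiv' i).symm.trans (σ.trans (finSuccEquiv' (0 : Fin (k + 1)))) with he
      have hnone : e none = none := by
        simp [he, finSuccEquiv'_symm_none, hσi, finSuccEquiv'_at]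
      refine ⟨e.removeNone, Finset.mem_univ _, ?_⟩
      ext x
      rcases eq_or_ne x i with rfl | hx
      · rw [hemb_at, hσi]
      · obtain ⟨c, rfl⟩ := Fin.exists_succAbove_eq hx
        rw [hemb_succAbove]
        have hsome : ∃ y, e (some c) = some y := by
          rcases Option.eq_none_or_eq_some (e (some c)) with h | ⟨y, h⟩
          · exact absurd (e.injective (h.trans hnone.symm)) (by simp)
          · exact ⟨y, h⟩
        have h1 : e (some c) = some (e.removeNone c) :=
          (Equiv.removeNone_some e hsome).symm
        have h2 : finSuccEquiv' (0 : Fin (k + 1)) (σ (i.succAbove c)) =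
            some (e.removeNone c) := by
          simpa [he, finSuccEquiv'_symm_some] using h1
        have := congrArg (finSuccEquiv' (0 : Fin (k + 1))).symm h2
        rw [Equiv.symm_apply_apply, finSuccEquiv'_symm_some, Fin.zero_succAbove] at this
        exact congrArg Fin.val this.symm
    · intro τ _
      exact (hval τ).symm
  -- finishing with the constants
  show ((k + 1).factorial : ℝ)⁻¹ * ∑ σ : Equiv.Perm (Fin (k + 1)), f σ =
    (1 / (k + 1 : ℝ)) * ((k.factorial : ℝ)⁻¹ * ∑ τ : Equiv.Perm (Fin k), g τ)
  rw [hsum, Nat.factorial_succ]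
  have h1 : ((k : ℝ) + 1) ≠ 0 := by positivity
  have h2 : (k.factorial : ℝ) ≠ 0 := by positivity
  push_cast
  field_simp
  try ring
end

section
/- Let A be a self-adjoint operator on a finite-dimensional real inner product space with a simple largest eigenvalue equal to 1 and eigenvector w, and suppose ⟨Ax, Ax⟩ ≥ ⟨x, Ax⟩ for all x. Then for all x, y with ⟨y, Ay⟩ ≥ 0, we have ⟨x, Ay⟩² ≥ ⟨x, Ax⟩⟨y, Ay⟩. -/
open scoped RealInnerProductSpace

set_option maxHeartbeats 1000000

theorem stmt13 {E : Type*} [NormedAddCommGroup E] [InnerProductSpace ℝ E]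
    [FiniteDimensional ℝ E] (A : E →ₗ[ℝ] E)
    (hsa : ∀ x y : E, ⟪A x, y⟫ = ⟪x, A y⟫)
    (w : E) (hw : w ≠ 0) (hAw : A w = w)
    (hsimple : Module.finrank ℝ (Module.End.eigenspace A 1) = 1)
    (hmax : ∀ μ : ℝ, Module.End.HasEigenvalue A μ → μ ≠ 1 → μ < 1)
    (hB : ∀ x : E, ⟪A x, A x⟫ ≥ ⟪x, A x⟫) :
    ∀ x y : E, 0 ≤ ⟪y, A y⟫ → ⟪x, A y⟫ ^ 2 ≥ ⟪x, A x⟫ * ⟪y, A y⟫ := by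
  -- eigenspace of 1 equals span of w
  have hwmem : w ∈ Module.End.eigenspace A 1 := by
    simp [Module.End.mem_eigenspace_iff, hAw]
  have hspan_le : (ℝ ∙ w) ≤ Module.End.eigenspace A 1 :=
    (Submodule.span_singleton_le_iff_mem _ _).mpr hwmem
  have hspan_eq : (ℝ ∙ w) = Module.End.eigenspace A 1 := by
    apply Submodule.eq_of_le_of_finrank_le hspan_le
    rw [hsimple, finrank_span_singleton hw]
  -- the restriction of A to the orthogonal complement of w
  set F : Submodule ℝ E := (ℝ ∙ w)ᗮ with hF
  have hinv : ∀ u ∈ F, A u ∈ F := by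
    intro u hu
    rw [hF, Submodule.mem_orthogonal_singleton_iff_inner_left] at hu ⊢
    rw [hsa, hAw]
    exact hu
  set T : F →ₗ[ℝ] F := A.restrict hinv with hT
  have hTcoe : ∀ x : F, (T x : E) = A x := fun x => rfl
  have hTsym : T.IsSymmetric := by
    intro x y
    rw [Submodule.coe_inner, Submodule.coe_inner, hTcoe, hTcoe]
    exact hsa x y
  -- key: A is negative semidefinite on the orthogonal complement of w
  have hneg : ∀ u : E, ⟪u, w⟫ = 0 → ⟪u, A u⟫ ≤ 0 := by
    intro u hu
    rcases eq_or_ne u 0 with rfl | hu0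
    · simp
    have huF : u ∈ F := Submodule.mem_orthogonal_singleton_iff_inner_left.mpr hu
    haveI : Nontrivial F := nontrivial_of_ne ⟨u, huF⟩ 0 (by
      simp only [ne_eq, Submodule.mk_eq_zero]; exact hu0)
    set μ : ℝ := ⨆ x : { x : F // x ≠ 0 }, RCLike.re ⟪T x, x⟫ / ‖(x : F)‖ ^ 2 with hμdef
    have hμ : Module.End.HasEigenvalue T μ :=
      hTsym.hasEigenvalue_iSup_of_finiteDimensional
    obtain ⟨v, hv⟩ := hμ.exists_hasEigenvector
    have hv0 : (v : E) ≠ 0 := fun h => hv.2 (by simpa using h)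
    have hAv : A v = μ • (v : E) := by
      have := hv.apply_eq_smul
      calc (A v : E) = ((T v : F) : E) := rfl
        _ = ((μ • v : F) : E) := by rw [this]
        _ = μ • (v : E) := rfl
    -- μ is an eigenvalue of A
    have hμA : Module.End.HasEigenvalue A μ :=
      Module.End.hasEigenvalue_of_hasEigenvector
        ⟨Module.End.mem_eigenspace_iff.mpr hAv, hv0⟩
    -- μ² ≥ μ
    have hvv : (0:ℝ) < ⟪(v:E), (v:E)⟫ := by
      rw [real_inner_self_eq_norm_sq]
      exact pow_pos (norm_pos_iff.mpr hv0) 2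
    have hsq : μ * μ ≥ μ := by
      have := hB (v : E)
      rw [hAv, real_inner_smul_left, real_inner_smul_right] at this
      nlinarith
    -- μ ≠ 1
    have hμne : μ ≠ 1 := by
      intro h
      have hv1 : (v : E) ∈ Module.End.eigenspace A 1 := by
        rw [Module.End.mem_eigenspace_iff, hAv, h]
      rw [← hspan_eq] at hv1
      have : (v : E) = 0 :=
        (Submodule.disjoint_def.mp (Submodule.orthogonal_disjoint (ℝ ∙ w))) _ hv1 v.2
      exact hv0 this
    have hμlt : μ < 1 := hmax μ hμA hμne
    have hμ0 : μ ≤ 0 := by nlinarith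
    -- Rayleigh quotient bound
    have hbdd : BddAbove (Set.range fun x : { x : F // x ≠ 0 } =>
        RCLike.re ⟪T x, x⟫ / ‖(x : F)‖ ^ 2) := by
      refine ⟨‖LinearMap.toContinuousLinearMap T‖, ?_⟩
      rintro r ⟨x, rfl⟩
      have hx : (0:ℝ) < ‖(x : F)‖ := norm_pos_iff.mpr x.2
      have h1 : ⟪T x, (x : F)⟫ ≤ ‖T (x : F)‖ * ‖(x : F)‖ := real_inner_le_norm _ _
      have h2 : ‖T (x : F)‖ ≤ ‖LinearMap.toContinuousLinearMap T‖ * ‖(x : F)‖ := by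
        have := (LinearMap.toContinuousLinearMap T).le_opNorm (x : F)
        simpa using this
      rw [div_le_iff₀ (pow_pos hx 2)]
      simp only [RCLike.re_to_real]
      nlinarith
    have hle : RCLike.re ⟪T ⟨u, huF⟩, (⟨u, huF⟩ : F)⟫ / ‖u‖ ^ 2 ≤ μ := by
      have := le_ciSup hbdd (⟨⟨u, huF⟩, by simp [hu0]⟩ : { x : F // x ≠ 0 })
      simpa [hμdef] using this
    have hun : (0:ℝ) < ‖u‖ ^ 2 := pow_pos (norm_pos_iff.mpr hu0) 2
    have hinner : ⟪T ⟨u, huF⟩, (⟨u, huF⟩ : F)⟫ = ⟪A u, u⟫ := by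
      rw [Submodule.coe_inner]; rfl
    rw [hinner] at hle
    simp only [RCLike.re_to_real] at hle
    rw [div_le_iff₀ hun] at hle
    have : ⟪A u, u⟫ ≤ 0 := le_trans hle (by nlinarith)
    rwa [real_inner_comm] at this
  -- main argument
  intro x y hy
  by_contra hcon
  push_neg at hcon
  have hxy2 : (0:ℝ) ≤ ⟪x, A y⟫ ^ 2 := sq_nonneg _
  have hR : 0 < ⟪y, A y⟫ := by
    rcases lt_or_eq_of_le hy with h | h
    · exact h
    · exfalso; rw [← h, mul_zero] at hcon; nlinarith
  have hP : 0 < ⟪x, A x⟫ := by nlinarith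
  set c : ℝ := ⟪y, w⟫ with hc
  set d : ℝ := ⟪x, w⟫ with hd
  have hd0 : d ≠ 0 := by
    intro h
    have := hneg x (by rw [← hd, h])
    nlinarith
  set u : E := c • x - d • y with hu
  have huw : ⟪u, w⟫ = 0 := by
    rw [hu, inner_sub_left, real_inner_smul_left, real_inner_smul_left, ← hc, ← hd]
    ring
  have hsymB : ⟪y, A x⟫ = ⟪x, A y⟫ := by
    rw [← hsa, real_inner_comm]
  have hBu : ⟪u, A u⟫ = c ^ 2 * ⟪x, A x⟫ - 2 * c * d * ⟪x, A y⟫ + d ^ 2 * ⟪y, A y⟫ := by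
    rw [hu]
    simp only [map_sub, map_smul, inner_sub_left, inner_sub_right,
      real_inner_smul_left, real_inner_smul_right, hsymB]
    ring
  have h0 := hneg u huw
  rw [hBu] at h0
  nlinarith [sq_nonneg (c * ⟪x, A x⟫ - d * ⟪x, A y⟫), sq_pos_of_ne_zero hd0,
    mul_pos (sq_pos_of_ne_zero hd0) (sub_pos.mpr hcon)]
end
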